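/- For n > 2 and 2 ≤ k ≤ n-1, the number of non-crossing pair partitions of {1,...,2n} with largest left index l_n = 2n-k equals Σ_{h=k-1}^{n-1} |NCPP_h(2n-2)|, where NCPP_h(2m) is the set of non-crossing pair partitions of {1,...,2m} with largest left index 2m-h. -/

import Mathlib

/-- `{(l h, r h)}_{h}` is a pair partition of `{1,...,2n}`. -/
def IsPairPartition (n : ℕ) (l r : Fin n → ℕ) : Prop :=
  (∀ h, l h < r h) ∧ StrictMono l ∧
    (Finset.univ.image l ∪ Finset.univ.image r) = Finset.Icc 1 (2 * n)

/-- Non-crossing condition for a pair partition. -/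
def IsNonCrossing (n : ℕ) (l r : Fin n → ℕ) : Prop :=
  ∀ h k : Fin n, h < k → (l k < r h ↔ r k < r h)

/-- The number of non-crossing pair partitions of `{1,...,2n}` whose largest
left index `lₙ` satisfies `2n - lₙ = k`. -/
noncomputable def NCPPcard (n k : ℕ) : ℕ :=
  Nat.card {p : (Fin n → ℕ) × (Fin n → ℕ) //
    IsPairPartition n p.1 p.2 ∧ IsNonCrossing n p.1 p.2 ∧
    ∃ h : Fin n, (∀ h' : Fin n, p.1 h' ≤ p.1 h) ∧ 2 * n - p.1 h = k}

namespace NCPPaux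

lemma mem_bounds {n : ℕ} {l r : Fin n → ℕ} (hp : IsPairPartition n l r) (i : Fin n) :
    (1 ≤ l i ∧ l i ≤ 2 * n) ∧ (1 ≤ r i ∧ r i ≤ 2 * n) := by
  have hl : l i ∈ Finset.Icc 1 (2 * n) := by
    rw [← hp.2.2]
    exact Finset.mem_union_left _ (Finset.mem_image_of_mem l (Finset.mem_univ i))
  have hr : r i ∈ Finset.Icc 1 (2 * n) := by
    rw [← hp.2.2]
    exact Finset.mem_union_right _ (Finset.mem_image_of_mem r (Finset.mem_univ i))
  rw [Finset.mem_Icc] at hl hr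
  exact ⟨hl, hr⟩

lemma inj_disj {n : ℕ} {l r : Fin n → ℕ} (hp : IsPairPartition n l r) :
    Function.Injective r ∧ ∀ i j, l i ≠ r j := by
  obtain ⟨h1, h2, h3⟩ := hp
  set A := Finset.univ.image l with hA
  set B := Finset.univ.image r with hB
  have hcardI : (Finset.Icc 1 (2 * n)).card = 2 * n := by
    rw [Nat.card_Icc]; omega
  have hAle : A.card ≤ n := le_trans (Finset.card_image_le) (by simp)
  have hBle : B.card ≤ n := le_trans (Finset.card_image_le) (by simp)
  have hU : (A ∪ B).card = 2 * n := by rw [h3, hcardI]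
  have hUle : (A ∪ B).card + (A ∩ B).card = A.card + B.card :=
    Finset.card_union_add_card_inter A B
  have hBcard : B.card = n := by omega
  have hIcard : (A ∩ B).card = 0 := by omega
  have hInter : A ∩ B = ∅ := Finset.card_eq_zero.mp hIcard
  constructor
  · have : Set.InjOn r (Finset.univ : Finset (Fin n)) := by
      rw [← Finset.card_image_iff]
      rw [← hB] at *
      simp only [Finset.card_univ, Fintype.card_fin]
      exact hBcard
    intro x y hxy
    exact this (by simp) (by simp) hxy
  · intro i j hij
    have hiA : l i ∈ A := Finset.mem_image_of_mem l (Finset.mem_univ i)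
    have hjB : r j ∈ B := Finset.mem_image_of_mem r (Finset.mem_univ j)
    rw [hij] at hiA
    have : r j ∈ A ∩ B := Finset.mem_inter.mpr ⟨hiA, hjB⟩
    rw [hInter] at this
    exact absurd this (Finset.notMem_empty _)

lemma r_last {N : ℕ} {l r : Fin (N + 1) → ℕ} (hp : IsPairPartition (N + 1) l r)
    (hnc : IsNonCrossing (N + 1) l r) : r (Fin.last N) = l (Fin.last N) + 1 := by
  obtain ⟨h1, h2, h3⟩ := hp
  have hmax : ∀ j, l j ≤ l (Fin.last N) := fun j => h2.monotone (Fin.le_last j)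
  have hb := mem_bounds ⟨h1, h2, h3⟩ (Fin.last N)
  have hlt := h1 (Fin.last N)
  have hmem : l (Fin.last N) + 1 ∈ Finset.Icc 1 (2 * (N + 1)) := by
    rw [Finset.mem_Icc]; omega
  rw [← h3, Finset.mem_union] at hmem
  rcases hmem with hm | hm
  · rw [Finset.mem_image] at hm
    obtain ⟨j, -, hj⟩ := hm
    have := hmax j
    omega
  · rw [Finset.mem_image] at hm
    obtain ⟨j, -, hj⟩ := hm
    by_cases hje : j = Fin.last N
    · subst hje; omega
    · obtain ⟨j', rfl⟩ := Fin.exists_castSucc_eq.mpr hje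
      have hjlt : j'.castSucc < Fin.last N := Fin.castSucc_lt_last j'
      have key := hnc j'.castSucc (Fin.last N) hjlt
      omega

lemma lb {N : ℕ} {l : Fin (N + 1) → ℕ} (hl : StrictMono l) (h1 : ∀ i, 1 ≤ l i) :
    ∀ v : ℕ, ∀ hv : v < N + 1, v + 1 ≤ l ⟨v, hv⟩ := by
  intro v
  induction v with
  | zero => intro hv; exact h1 _
  | succ w ih =>
    intro hv
    have h2 := ih (by omega)
    have h3 : (⟨w, by omega⟩ : Fin (N + 1)) < ⟨w + 1, hv⟩ := by simp [Fin.lt_def]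
    have := hl h3
    omega

lemma exists_max_iff {N : ℕ} {l : Fin (N + 1) → ℕ} (hl : StrictMono l) (k : ℕ) :
    (∃ h : Fin (N + 1), (∀ h', l h' ≤ l h) ∧ 2 * (N + 1) - l h = k) ↔
      2 * (N + 1) - l (Fin.last N) = k := by
  constructor
  · rintro ⟨h, hmax, hk⟩
    have h1 : l (Fin.last N) ≤ l h := hmax _
    have h2 : l h ≤ l (Fin.last N) := hl.monotone (Fin.le_last h)
    omega
  · intro h
    exact ⟨Fin.last N, fun h' => hl.monotone (Fin.le_last h'), h⟩

lemma finite_aux (n : ℕ) (Q : (Fin n → ℕ) × (Fin n → ℕ) → Prop) :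
    Finite {p : (Fin n → ℕ) × (Fin n → ℕ) // IsPairPartition n p.1 p.2 ∧ Q p} := by
  let f : {p : (Fin n → ℕ) × (Fin n → ℕ) // IsPairPartition n p.1 p.2 ∧ Q p} →
      (Fin n → Fin (2 * n + 1)) × (Fin n → Fin (2 * n + 1)) :=
    fun p => (fun i => ⟨p.1.1 i, by have h := mem_bounds p.2.1 i; omega⟩,
              fun i => ⟨p.1.2 i, by have h := mem_bounds p.2.1 i; omega⟩)
  have hf : Function.Injective f := by
    intro p q h
    have h1 : ∀ i, p.1.1 i = q.1.1 i := fun i => by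
      have := congrFun (congrArg Prod.fst h) i
      simpa [f, Fin.ext_iff] using this
    have h2 : ∀ i, p.1.2 i = q.1.2 i := fun i => by
      have := congrFun (congrArg Prod.snd h) i
      simpa [f, Fin.ext_iff] using this
    apply Subtype.ext
    exact Prod.ext (funext h1) (funext h2)
  exact Finite.of_injective f hf

end NCPPaux

namespace NCPPaux

def shrink (a x : ℕ) : ℕ := if x < a then x else x - 2
def grow (a x : ℕ) : ℕ := if x < a then x else x + 2

lemma shrink_grow (a x : ℕ) : shrink a (grow a x) = x := by
  unfold shrink grow; split_ifs <;> omega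

lemma grow_shrink {a x : ℕ} (hx : x < a ∨ a + 2 ≤ x) : grow a (shrink a x) = x := by
  unfold shrink grow; split_ifs <;> omega

lemma grow_eq_of_lt {a x : ℕ} (hx : x < a) : grow a x = x := by
  unfold grow; split_ifs <;> omega

def fwdL (M : ℕ) (l : Fin (M + 2) → ℕ) : Fin (M + 1) → ℕ := fun i => l i.castSucc
def fwdR (M a : ℕ) (r : Fin (M + 2) → ℕ) : Fin (M + 1) → ℕ := fun i => shrink a (r i.castSucc)
def bwdL (M a : ℕ) (l : Fin (M + 1) → ℕ) : Fin (M + 2) → ℕ := Fin.lastCases a l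
def bwdR (M a : ℕ) (r : Fin (M + 1) → ℕ) : Fin (M + 2) → ℕ :=
  Fin.lastCases (a + 1) (fun i => grow a (r i))

lemma bwdL_castSucc (M a : ℕ) (l : Fin (M + 1) → ℕ) (i : Fin (M + 1)) :
    bwdL M a l i.castSucc = l i := Fin.lastCases_castSucc ..

lemma bwdL_last (M a : ℕ) (l : Fin (M + 1) → ℕ) : bwdL M a l (Fin.last (M + 1)) = a :=
  Fin.lastCases_last ..

lemma bwdR_castSucc (M a : ℕ) (r : Fin (M + 1) → ℕ) (i : Fin (M + 1)) :
    bwdR M a r i.castSucc = grow a (r i) := Fin.lastCases_castSucc ..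

lemma bwdR_last (M a : ℕ) (r : Fin (M + 1) → ℕ) : bwdR M a r (Fin.last (M + 1)) = a + 1 :=
  Fin.lastCases_last ..

end NCPPaux

namespace NCPPaux

lemma fwd_facts {M a k : ℕ} (hk1 : 2 ≤ k) (hk2 : k ≤ M + 1) (hA : a = 2 * (M + 2) - k)
    {l r : Fin (M + 2) → ℕ} (hp : IsPairPartition (M + 2) l r)
    (hnc : IsNonCrossing (M + 2) l r)
    (hex : ∃ h, (∀ h', l h' ≤ l h) ∧ 2 * (M + 2) - l h = k) :
    l (Fin.last (M + 1)) = a ∧ r (Fin.last (M + 1)) = a + 1 ∧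
      (∀ i : Fin (M + 1), l i.castSucc < a) ∧
      (∀ i : Fin (M + 1), r i.castSucc < a ∨ a + 2 ≤ r i.castSucc) := by
  obtain ⟨rinj, disj⟩ := inj_disj hp
  have hrl := r_last hp hnc
  have hgl : 2 * (M + 2) - l (Fin.last (M + 1)) = k := (exists_max_iff hp.2.1 k).mp hex
  have hbl := (mem_bounds hp (Fin.last (M + 1))).1.2
  have hla : l (Fin.last (M + 1)) = a := by omega
  have hlts : ∀ i : Fin (M + 1), l i.castSucc < a := by
    intro i
    have := hp.2.1 (Fin.castSucc_lt_last i)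
    omega
  refine ⟨hla, by omega, hlts, ?_⟩
  intro i
  have hne1 : l (Fin.last (M + 1)) ≠ r i.castSucc := disj _ _
  have hne2 : r i.castSucc ≠ r (Fin.last (M + 1)) := by
    intro e
    exact absurd (rinj e) (Fin.ne_last_of_lt (Fin.castSucc_lt_last i))
  have := (mem_bounds hp i.castSucc).2.1
  omega

lemma fwd_good {M a k : ℕ} (hk1 : 2 ≤ k) (hk2 : k ≤ M + 1) (hA : a = 2 * (M + 2) - k)
    {l r : Fin (M + 2) → ℕ} (hp : IsPairPartition (M + 2) l r)
    (hnc : IsNonCrossing (M + 2) l r)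
    (hex : ∃ h, (∀ h', l h' ≤ l h) ∧ 2 * (M + 2) - l h = k) :
    (IsPairPartition (M + 1) (fwdL M l) (fwdR M a r) ∧
      IsNonCrossing (M + 1) (fwdL M l) (fwdR M a r) ∧
      ∃ h, (∀ h', fwdL M l h' ≤ fwdL M l h) ∧
        2 * (M + 1) - fwdL M l h = 2 * (M + 1) - fwdL M l (Fin.last M)) ∧
      (2 * (M + 1) - fwdL M l (Fin.last M)) ∈ Finset.Icc (k - 1) (M + 1) := by
  obtain ⟨hla, hrl, hlts, hrgood⟩ := fwd_facts hk1 hk2 hA hp hnc hex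
  obtain ⟨h1, h2, h3⟩ := hp
  have hlmax : ∀ j, l j ≤ a := fun j => hla ▸ h2.monotone (Fin.le_last j)
  have hPP2 : StrictMono (fwdL M l) := by
    intro i j hij
    exact h2 (Fin.castSucc_lt_castSucc_iff.mpr hij)
  have hPP1 : ∀ i, fwdL M l i < fwdR M a r i := by
    intro i
    have := h1 i.castSucc
    have := hlts i
    have := hrgood i
    simp only [fwdL, fwdR, shrink]
    split_ifs <;> omega
  have hPP3 : (Finset.univ.image (fwdL M l) ∪ Finset.univ.image (fwdR M a r)) =
      Finset.Icc 1 (2 * (M + 1)) := by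
    ext x
    simp only [Finset.mem_union, Finset.mem_image, Finset.mem_univ, true_and, Finset.mem_Icc]
    constructor
    · rintro (⟨i, rfl⟩ | ⟨i, rfl⟩)
      · have := (mem_bounds ⟨h1, h2, h3⟩ i.castSucc).1
        have := hlts i
        simp only [fwdL]
        omega
      · have := (mem_bounds ⟨h1, h2, h3⟩ i.castSucc).2
        have := hrgood i
        simp only [fwdR, shrink]
        split_ifs <;> omega
    · intro hx
      by_cases hxa : x < a
      · have hmem : x ∈ Finset.Icc 1 (2 * (M + 2)) := by rw [Finset.mem_Icc]; omega
        rw [← h3, Finset.mem_union] at hmem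
        rcases hmem with hm | hm <;> rw [Finset.mem_image] at hm <;> obtain ⟨j, -, hj⟩ := hm
        · left
          have hjne : j ≠ Fin.last (M + 1) := by intro e; rw [e, hla] at hj; omega
          obtain ⟨j', rfl⟩ := Fin.exists_castSucc_eq.mpr hjne
          exact ⟨j', hj⟩
        · right
          have hjne : j ≠ Fin.last (M + 1) := by intro e; rw [e, hrl] at hj; omega
          obtain ⟨j', rfl⟩ := Fin.exists_castSucc_eq.mpr hjne
          refine ⟨j', ?_⟩
          simp only [fwdR, shrink, hj]
          rw [if_pos hxa]
      · have hmem : x + 2 ∈ Finset.Icc 1 (2 * (M + 2)) := by rw [Finset.mem_Icc]; omega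
        rw [← h3, Finset.mem_union] at hmem
        rcases hmem with hm | hm <;> rw [Finset.mem_image] at hm <;> obtain ⟨j, -, hj⟩ := hm
        · exfalso; have := hlmax j; omega
        · right
          have hjne : j ≠ Fin.last (M + 1) := by intro e; rw [e, hrl] at hj; omega
          obtain ⟨j', rfl⟩ := Fin.exists_castSucc_eq.mpr hjne
          refine ⟨j', ?_⟩
          simp only [fwdR, shrink, hj]
          split_ifs <;> omega
  have hNC : IsNonCrossing (M + 1) (fwdL M l) (fwdR M a r) := by
    intro i j hij
    have key := hnc i.castSucc j.castSucc (Fin.castSucc_lt_castSucc_iff.mpr hij)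
    have := hlts j
    have := hrgood i
    have := hrgood j
    simp only [fwdL, fwdR, shrink]
    split_ifs <;> omega
  refine ⟨⟨⟨hPP1, hPP2, hPP3⟩, hNC,
    ⟨Fin.last M, fun h' => hPP2.monotone (Fin.le_last h'), rfl⟩⟩, ?_⟩
  have hub : l ((Fin.last M).castSucc) < a := hlts _
  have hlbv : M + 1 ≤ l ((Fin.last M).castSucc) := by
    have h0 : ∀ i, 1 ≤ l i := fun i => (mem_bounds ⟨h1, h2, h3⟩ i).1.1
    have hlb := lb h2 h0 M (by omega)
    have he : ((Fin.last M).castSucc : Fin (M + 2)) = ⟨M, by omega⟩ := by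
      ext; simp
    rw [he]
    exact hlb
  rw [Finset.mem_Icc]
  simp only [fwdL]
  omega

lemma left_comp {M a k : ℕ} (hk1 : 2 ≤ k) (hk2 : k ≤ M + 1) (hA : a = 2 * (M + 2) - k)
    {l r : Fin (M + 2) → ℕ} (hp : IsPairPartition (M + 2) l r)
    (hnc : IsNonCrossing (M + 2) l r)
    (hex : ∃ h, (∀ h', l h' ≤ l h) ∧ 2 * (M + 2) - l h = k) :
    bwdL M a (fwdL M l) = l ∧ bwdR M a (fwdR M a r) = r := by
  obtain ⟨hla, hrl, hlts, hrgood⟩ := fwd_facts hk1 hk2 hA hp hnc hex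
  constructor
  · funext i
    induction i using Fin.lastCases with
    | last => rw [bwdL_last, hla]
    | cast i' => rw [bwdL_castSucc]; rfl
  · funext i
    induction i using Fin.lastCases with
    | last => rw [bwdR_last, hrl]
    | cast i' =>
      rw [bwdR_castSucc]
      simp only [fwdR]
      exact grow_shrink (hrgood i')

lemma right_comp (M a : ℕ) (l r : Fin (M + 1) → ℕ) :
    fwdL M (bwdL M a l) = l ∧ fwdR M a (bwdR M a r) = r := by
  constructor <;> funext i
  · simp only [fwdL, bwdL_castSucc]
  · simp only [fwdR, bwdR_castSucc, shrink_grow]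

end NCPPaux

namespace NCPPaux

lemma bwd_good {M a k h : ℕ} (hk1 : 2 ≤ k) (hk2 : k ≤ M + 1) (hA : a = 2 * (M + 2) - k)
    (hh : h ∈ Finset.Icc (k - 1) (M + 1))
    {l r : Fin (M + 1) → ℕ} (hq : IsPairPartition (M + 1) l r)
    (hnc : IsNonCrossing (M + 1) l r)
    (hex : ∃ h', (∀ h'', l h'' ≤ l h') ∧ 2 * (M + 1) - l h' = h) :
    IsPairPartition (M + 2) (bwdL M a l) (bwdR M a r) ∧
      IsNonCrossing (M + 2) (bwdL M a l) (bwdR M a r) ∧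
      ∃ h', (∀ h'', bwdL M a l h'' ≤ bwdL M a l h') ∧ 2 * (M + 2) - bwdL M a l h' = k := by
  rw [Finset.mem_Icc] at hh
  have hgl : 2 * (M + 1) - l (Fin.last M) = h := (exists_max_iff hq.2.1 h).mp hex
  have hbl := (mem_bounds hq (Fin.last M)).1.2
  have hlla : l (Fin.last M) < a := by omega
  obtain ⟨h1, h2, h3⟩ := hq
  have hlt_a : ∀ j, l j < a := fun j => lt_of_le_of_lt (h2.monotone (Fin.le_last j)) hlla
  have hPP1 : ∀ i, bwdL M a l i < bwdR M a r i := by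
    intro i
    induction i using Fin.lastCases with
    | last => rw [bwdL_last, bwdR_last]; omega
    | cast j =>
      rw [bwdL_castSucc, bwdR_castSucc]
      have := h1 j
      have := hlt_a j
      unfold grow
      split_ifs <;> omega
  have hne_last : ∀ {i j : Fin (M + 2)}, i < j → i ≠ Fin.last (M + 1) := by
    intro i j hij e
    have hj := j.isLt
    rw [e, Fin.lt_def] at hij
    simp only [Fin.val_last] at hij
    omega
  have hPP2 : StrictMono (bwdL M a l) := by
    intro i j hij
    obtain ⟨i', rfl⟩ := Fin.exists_castSucc_eq.mpr (hne_last hij)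
    rw [bwdL_castSucc]
    induction j using Fin.lastCases with
    | last => rw [bwdL_last]; exact hlt_a i'
    | cast j' =>
      rw [bwdL_castSucc]
      exact h2 (Fin.castSucc_lt_castSucc_iff.mp hij)
  have hPP3 : (Finset.univ.image (bwdL M a l) ∪ Finset.univ.image (bwdR M a r)) =
      Finset.Icc 1 (2 * (M + 2)) := by
    ext x
    simp only [Finset.mem_union, Finset.mem_image, Finset.mem_univ, true_and, Finset.mem_Icc]
    constructor
    · rintro (⟨i, rfl⟩ | ⟨i, rfl⟩)
      · induction i using Fin.lastCases with
        | last => rw [bwdL_last]; omega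
        | cast i' =>
          rw [bwdL_castSucc]
          have := (mem_bounds ⟨h1, h2, h3⟩ i').1
          omega
      · induction i using Fin.lastCases with
        | last => rw [bwdR_last]; omega
        | cast i' =>
          rw [bwdR_castSucc]
          have := (mem_bounds ⟨h1, h2, h3⟩ i').2
          unfold grow
          split_ifs <;> omega
    · intro hx
      by_cases hxa : x = a
      · exact Or.inl ⟨Fin.last (M + 1), by rw [bwdL_last, hxa]⟩
      by_cases hxa1 : x = a + 1
      · exact Or.inr ⟨Fin.last (M + 1), by rw [bwdR_last, hxa1]⟩
      by_cases hxlt : x < a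
      · have hmem : x ∈ Finset.Icc 1 (2 * (M + 1)) := by rw [Finset.mem_Icc]; omega
        rw [← h3, Finset.mem_union] at hmem
        rcases hmem with hm | hm <;> rw [Finset.mem_image] at hm <;> obtain ⟨j, -, hj⟩ := hm
        · exact Or.inl ⟨j.castSucc, by rw [bwdL_castSucc]; exact hj⟩
        · refine Or.inr ⟨j.castSucc, ?_⟩
          rw [bwdR_castSucc, hj]
          exact grow_eq_of_lt hxlt
      · have hmem : x - 2 ∈ Finset.Icc 1 (2 * (M + 1)) := by rw [Finset.mem_Icc]; omega
        rw [← h3, Finset.mem_union] at hmem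
        rcases hmem with hm | hm <;> rw [Finset.mem_image] at hm <;> obtain ⟨j, -, hj⟩ := hm
        · exfalso; have := hlt_a j; omega
        · refine Or.inr ⟨j.castSucc, ?_⟩
          rw [bwdR_castSucc, hj]
          unfold grow
          split_ifs <;> omega
  have hNC : IsNonCrossing (M + 2) (bwdL M a l) (bwdR M a r) := by
    intro i j hij
    obtain ⟨i', rfl⟩ := Fin.exists_castSucc_eq.mpr (hne_last hij)
    induction j using Fin.lastCases with
    | last =>
      rw [bwdL_last, bwdR_last, bwdR_castSucc]
      unfold grow
      split_ifs <;> omega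
    | cast j' =>
      rw [bwdL_castSucc, bwdR_castSucc, bwdR_castSucc]
      have key := hnc i' j' (Fin.castSucc_lt_castSucc_iff.mp hij)
      have := hlt_a j'
      unfold grow
      split_ifs <;> omega
  refine ⟨⟨hPP1, hPP2, hPP3⟩, hNC, Fin.last (M + 1), ?_, ?_⟩
  · intro h''
    induction h'' using Fin.lastCases with
    | last => exact le_refl _
    | cast i' =>
      rw [bwdL_castSucc, bwdL_last]
      exact le_of_lt (hlt_a i')
  · rw [bwdL_last]
    omega

end NCPPaux

namespace NCPPaux

def Ss (M k : ℕ) : Type :=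
  {p : (Fin (M + 2) → ℕ) × (Fin (M + 2) → ℕ) //
    IsPairPartition (M + 2) p.1 p.2 ∧ IsNonCrossing (M + 2) p.1 p.2 ∧
    ∃ h : Fin (M + 2), (∀ h', p.1 h' ≤ p.1 h) ∧ 2 * (M + 2) - p.1 h = k}

def Tt (M h : ℕ) : Type :=
  {p : (Fin (M + 1) → ℕ) × (Fin (M + 1) → ℕ) //
    IsPairPartition (M + 1) p.1 p.2 ∧ IsNonCrossing (M + 1) p.1 p.2 ∧
    ∃ h' : Fin (M + 1), (∀ h'', p.1 h'' ≤ p.1 h') ∧ 2 * (M + 1) - p.1 h' = h}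

end NCPPaux

open NCPPaux

theorem stmt_16 (n k : ℕ) (hn : 2 < n) (hk1 : 2 ≤ k) (hk2 : k ≤ n - 1) :
    NCPPcard n k = ∑ h ∈ Finset.Icc (k - 1) (n - 1), NCPPcard (n - 1) h := by
  obtain ⟨M, rfl⟩ : ∃ M, n = M + 2 := ⟨n - 2, by omega⟩
  have hk2' : k ≤ M + 1 := by omega
  show NCPPcard (M + 2) k = ∑ h ∈ Finset.Icc (k - 1) (M + 1), NCPPcard (M + 1) h
  have e : Ss M k ≃ (Σ i : ↥(Finset.Icc (k - 1) (M + 1)), Tt M ↑i) := by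
    refine ⟨fun p => ⟨⟨2 * (M + 1) - fwdL M p.1.1 (Fin.last M),
        (fwd_good hk1 hk2' rfl p.2.1 p.2.2.1 p.2.2.2).2⟩,
        ⟨(fwdL M p.1.1, fwdR M (2 * (M + 2) - k) p.1.2),
        (fwd_good hk1 hk2' rfl p.2.1 p.2.2.1 p.2.2.2).1⟩⟩,
      fun x => ⟨(bwdL M (2 * (M + 2) - k) x.2.1.1, bwdR M (2 * (M + 2) - k) x.2.1.2),
        bwd_good hk1 hk2' rfl x.1.2 x.2.2.1 x.2.2.2.1 x.2.2.2.2⟩, ?_, ?_⟩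
    · rintro ⟨⟨lp, rp⟩, hp⟩
      apply Subtype.ext
      have hc := left_comp hk1 hk2' rfl hp.1 hp.2.1 hp.2.2
      show (bwdL M (2 * (M + 2) - k) (fwdL M lp),
        bwdR M (2 * (M + 2) - k) (fwdR M (2 * (M + 2) - k) rp)) = (lp, rp)
      rw [hc.1, hc.2]
    · rintro ⟨⟨h, hmem⟩, ⟨⟨lq, rq⟩, hq⟩⟩
      have hc := right_comp M (2 * (M + 2) - k) lq rq
      have hgl : 2 * (M + 1) - lq (Fin.last M) = h := (exists_max_iff hq.1.2.1 h).mp hq.2.2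
      have hidx : 2 * (M + 1) - fwdL M (bwdL M (2 * (M + 2) - k) lq) (Fin.last M) = h := by
        rw [hc.1]; exact hgl
      subst hidx
      refine Sigma.ext rfl (heq_of_eq ?_)
      refine Subtype.ext ?_
      show (fwdL M (bwdL M (2 * (M + 2) - k) lq),
        fwdR M (2 * (M + 2) - k) (bwdR M (2 * (M + 2) - k) rq)) = (lq, rq)
      rw [hc.1, hc.2]
  calc NCPPcard (M + 2) k
      = Nat.card (Ss M k) := rfl
    _ = Nat.card (Σ i : ↥(Finset.Icc (k - 1) (M + 1)), Tt M ↑i) := Nat.card_congr e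
    _ = ∑ i : ↥(Finset.Icc (k - 1) (M + 1)), Nat.card (Tt M ↑i) := by
        letI : ∀ i : ↥(Finset.Icc (k - 1) (M + 1)), Fintype (Tt M ↑i) :=
          fun i => @Fintype.ofFinite _ (finite_aux (M + 1) _)
        rw [Nat.card_eq_fintype_card, Fintype.card_sigma]
        exact Finset.sum_congr rfl fun i _ => (Nat.card_eq_fintype_card (α := Tt M ↑i)).symm
    _ = ∑ h ∈ Finset.Icc (k - 1) (M + 1), NCPPcard (M + 1) h :=
        Finset.sum_coe_sort (Finset.Icc (k - 1) (M + 1)) (fun h => NCPPcard (M + 1) h)
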